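/- Let N ≥ 2 and let y ∈ ℝ^N with y_1 > … > y_{N−1} > y_N = 0 satisfy 4 Σ_{j ≠ i} 1/(y_i² − y_j²) = 1 for every i = 1,…,N−1. Then for each c > 0 the curve x(t) := √(t + c²) · y satisfies x(0) = c·y, takes values in the interior of C_N^D, and solves x'(t) = H^D(x(t)) for all t ≥ 0. -/

import Mathlib

/-- For `N ≥ 2`: if `y_1 > ⋯ > y_{N−1} > y_N = 0` satisfies
`4 ∑_{j ≠ i} 1/(y_i² − y_j²) = 1` for every `i = 1, …, N−1`, then for each `c > 0` the
curve `x(t) = √(t + c²) · y` starts at `c·y`, stays in the interior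
`{x : x_1 > ⋯ > x_{N−1} > |x_N|}` of `C_N^D` for `t ≥ 0`, and solves `x' = H^D(x)`. -/
theorem explicit_solution_D (N : ℕ) (hN : 2 ≤ N)
    (H : EuclideanSpace ℝ (Fin N) → EuclideanSpace ℝ (Fin N))
    (hH : ∀ x, ∀ i : Fin N,
      H x i = ∑ j ∈ Finset.univ.erase i, (1 / (x i - x j) + 1 / (x i + x j)))
    (y : EuclideanSpace ℝ (Fin N))
    (hy : ∀ i j : Fin N, i < j → j.val + 1 < N → y j < y i)
    (hylast : y ⟨N - 1, by omega⟩ = 0)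
    (hypos : ∀ i : Fin N, i.val + 1 < N → 0 < y i)
    (hstat : ∀ i : Fin N, i.val + 1 < N →
      4 * (∑ j ∈ Finset.univ.erase i, 1 / (y i ^ 2 - y j ^ 2)) = 1)
    (c : ℝ) (hc : 0 < c)
    (x : ℝ → EuclideanSpace ℝ (Fin N))
    (hx : ∀ t, x t = Real.sqrt (t + c ^ 2) • y) :
    x 0 = c • y
      ∧ (∀ t ≥ (0:ℝ), (∀ i j : Fin N, i < j → j.val + 1 < N → x t j < x t i)
          ∧ |x t ⟨N - 1, by omega⟩| < x t ⟨N - 2, by omega⟩)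
      ∧ (∀ t ≥ (0:ℝ), HasDerivAt x (H (x t)) t) := by
  have hylast' : ∀ j : Fin N, ¬ (j.val + 1 < N) → y j = 0 := by
    intro j hj
    have hj' : j = ⟨N - 1, by omega⟩ := by
      apply Fin.ext
      have := j.isLt
      simp only
      omega
    rw [hj']; exact hylast
  have hynn : ∀ j : Fin N, 0 ≤ y j := by
    intro j
    by_cases h : j.val + 1 < N
    · exact (hypos j h).le
    · rw [hylast' j h]
  -- the key algebraic identity
  have hsum : ∀ i : Fin N, ∑ j ∈ Finset.univ.erase i,
      ((y i - y j)⁻¹ + (y i + y j)⁻¹) = y i / 2 := by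
    intro i
    by_cases hi : i.val + 1 < N
    · have hterm : ∀ j ∈ Finset.univ.erase i,
          (y i - y j)⁻¹ + (y i + y j)⁻¹ = 2 * y i * (1 / (y i ^ 2 - y j ^ 2)) := by
        intro j hj
        have hji : j ≠ i := Finset.ne_of_mem_erase hj
        have hne : y j ≠ y i := by
          by_cases h : j.val + 1 < N
          · rcases hji.lt_or_gt with hlt | hlt
            · exact (hy j i hlt hi).ne'
            · exact (hy i j hlt h).ne
          · rw [hylast' j h]; exact (hypos i hi).ne
        have h1 : y i - y j ≠ 0 := sub_ne_zero.mpr hne.symm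
        have h2 : y i + y j ≠ 0 :=
          ne_of_gt (add_pos_of_pos_of_nonneg (hypos i hi) (hynn j))
        have h3 : y i ^ 2 - y j ^ 2 ≠ 0 := by
          have : y i ^ 2 - y j ^ 2 = (y i - y j) * (y i + y j) := by ring
          rw [this]; exact mul_ne_zero h1 h2
        field_simp
        ring
      rw [Finset.sum_congr rfl hterm, ← Finset.mul_sum]
      have hS : (∑ j ∈ Finset.univ.erase i, 1 / (y i ^ 2 - y j ^ 2)) = 1 / 4 := by
        have := hstat i hi; linarith
      rw [hS]; ring
    · have hyi : y i = 0 := hylast' i hi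
      simp [hyi, inv_neg]
  -- positivity of the scale factor
  have hsq : ∀ t : ℝ, t ≥ 0 → 0 < Real.sqrt (t + c ^ 2) := by
    intro t ht
    apply Real.sqrt_pos.mpr
    positivity
  refine ⟨?_, ?_, ?_⟩
  · rw [hx 0, zero_add, Real.sqrt_sq hc.le]
  · intro t ht
    constructor
    · intro i j hij hjN
      rw [hx t]
      simp only [PiLp.smul_apply, smul_eq_mul]
      exact mul_lt_mul_of_pos_left (hy i j hij hjN) (hsq t ht)
    · rw [hx t]
      simp only [PiLp.smul_apply, smul_eq_mul]
      rw [hylast, mul_zero, abs_zero]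
      have h2N : (⟨N - 2, by omega⟩ : Fin N).val + 1 < N := by
        simp only; omega
      exact mul_pos (hsq t ht) (hypos _ h2N)
  · intro t ht
    set s : ℝ := Real.sqrt (t + c ^ 2) with hs_def
    have hs : 0 < s := hsq t ht
    have htc : t + c ^ 2 ≠ 0 := by positivity
    have hd : HasDerivAt (fun u : ℝ => Real.sqrt (u + c ^ 2)) (1 / (2 * s)) t := by
      have h1 : HasDerivAt (fun u : ℝ => u + c ^ 2) 1 t := (hasDerivAt_id t).add_const _
      have h2 := (Real.hasDerivAt_sqrt htc).comp t h1
      rw [hs_def]; simpa [Function.comp_def] using h2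
    have hD : HasDerivAt (fun u : ℝ => Real.sqrt (u + c ^ 2) • y) ((1 / (2 * s)) • y) t :=
      hd.smul_const y
    have hxfun : x = fun u : ℝ => Real.sqrt (u + c ^ 2) • y := funext hx
    have heq : H (x t) = (1 / (2 * s)) • y := by
      ext i
      rw [hH (x t) i]
      have hterm : ∀ j ∈ Finset.univ.erase i,
          1 / (x t i - x t j) + 1 / (x t i + x t j)
            = s⁻¹ * ((y i - y j)⁻¹ + (y i + y j)⁻¹) := by
        intro j _
        rw [hx t]
        simp only [PiLp.smul_apply, smul_eq_mul]
        rw [← mul_sub, ← mul_add, one_div, one_div, mul_inv, mul_inv, ← mul_add]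
      rw [Finset.sum_congr rfl hterm, ← Finset.mul_sum, hsum i]
      simp only [PiLp.smul_apply, smul_eq_mul]
      rw [one_div, mul_inv]
      ring
    rw [heq, hxfun]
    exact hD
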